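/- Define a: M → ℚ on the free magma M on one generator x by a(x) = 1 and a(t₁·t₂) = a(t₁)a(t₂)/(2^n - 2) where n = deg(t₁·t₂). Then for every n ≥ 1, the sum of a(t) over all t ∈ M of degree n equals 1/n!. -/

import Mathlib

/-- Degree of a tree in the free magma on one generator. -/
def deg : FreeMagma Unit → ℕ
  | FreeMagma.of _ => 1
  | FreeMagma.mul t₁ t₂ => deg t₁ + deg t₂

/-- Coefficients of the non-associative exponential. -/
def expCoeff : FreeMagma Unit → ℚ
  | FreeMagma.of _ => 1
  | FreeMagma.mul t₁ t₂ =>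
      expCoeff t₁ * expCoeff t₂ / (2 ^ (deg (FreeMagma.mul t₁ t₂)) - 2)

lemma deg_pos (t : FreeMagma Unit) : 1 ≤ deg t := by
  induction t with
  | ih1 _ => simp [deg]
  | ih2 t₁ t₂ ih₁ ih₂ => simp [deg]; omega

def trees : ℕ → Finset (FreeMagma Unit)
  | 0 => ∅
  | 1 => {FreeMagma.of ()}
  | (m+2) => (Finset.Icc 1 (m+1)).attach.biUnion fun k =>
      ((trees k.1) ×ˢ (trees (m+2-k.1))).image fun p => FreeMagma.mul p.1 p.2
  termination_by n => n
  decreasing_by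
    all_goals (have := Finset.mem_Icc.mp k.2; omega)

lemma mem_trees : ∀ n (t : FreeMagma Unit), t ∈ trees n ↔ deg t = n := by
  intro n
  induction n using Nat.strong_induction_on with
  | _ n ih =>
    match n with
    | 0 => intro t; simp [trees]; have := deg_pos t; omega
    | 1 =>
      intro t
      cases t with
      | of u => cases u; simp [trees, deg]
      | mul t₁ t₂ =>
        simp only [trees, Finset.mem_singleton, deg]
        have := deg_pos t₁; have := deg_pos t₂
        constructor
        · intro h; exact absurd h (by simp)
        · omega
    | (m+2) =>
      intro t
      constructor
      · intro ht
        simp only [trees, Finset.mem_biUnion, Finset.mem_attach, Finset.mem_image,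
          Finset.mem_product, true_and] at ht
        obtain ⟨⟨k, hk⟩, ⟨p, ⟨hp₁, hp₂⟩, hpt⟩⟩ := ht
        have hk' := Finset.mem_Icc.mp hk
        have h₁ : deg p.1 = k := (ih k (by omega) p.1).mp hp₁
        have h₂ : deg p.2 = m+2-k := (ih (m+2-k) (by omega) p.2).mp hp₂
        subst hpt
        simp [deg, h₁, h₂]; omega
      · intro ht
        cases t with
        | of u => simp [deg] at ht
        | mul t₁ t₂ =>
          have h₁ := deg_pos t₁; have h₂ := deg_pos t₂
          simp only [deg] at ht
          simp only [trees, Finset.mem_biUnion, Finset.mem_attach, Finset.mem_image,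
            Finset.mem_product, true_and]
          refine ⟨⟨deg t₁, Finset.mem_Icc.mpr (by omega)⟩, ⟨(t₁, t₂), ⟨?_, ?_⟩, rfl⟩⟩
          · exact (ih (deg t₁) (by omega) t₁).mpr rfl
          · exact (ih (m+2-deg t₁) (by omega) t₂).mpr (by omega)

lemma sum_choose_mid (n : ℕ) (hn : 2 ≤ n) :
    ∑ k ∈ Finset.Icc 1 (n-1), n.choose k + 2 = 2^n := by
  have h := Nat.sum_range_choose n
  have hs : Finset.range (n+1) = insert 0 (insert n (Finset.Icc 1 (n-1))) := by
    ext k; simp [Finset.mem_Icc, Finset.mem_range]; omega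
  rw [hs, Finset.sum_insert (by simp [Finset.mem_Icc]; omega),
    Finset.sum_insert (by simp [Finset.mem_Icc]; omega)] at h
  simp [Nat.choose_self, Nat.choose_zero_right] at h
  omega

lemma sum_inv_factorial (n : ℕ) (hn : 2 ≤ n) :
    ∑ k ∈ Finset.Icc 1 (n-1), (1 / (k.factorial : ℚ)) * (1 / ((n-k).factorial : ℚ))
      = (2^n - 2) / (n.factorial : ℚ) := by
  have hterm : ∀ k ∈ Finset.Icc 1 (n-1),
      (1 / (k.factorial : ℚ)) * (1 / ((n-k).factorial : ℚ))
        = ((n.choose k : ℚ)) / (n.factorial : ℚ) := by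
    intro k hk
    have hk' := Finset.mem_Icc.mp hk
    have hle : k ≤ n := by omega
    have h := Nat.choose_mul_factorial_mul_factorial hle
    have hq : ((n.choose k : ℚ)) * (k.factorial : ℚ) * ((n-k).factorial : ℚ)
        = (n.factorial : ℚ) := by exact_mod_cast congrArg (Nat.cast : ℕ → ℚ) h
    have h1 : (k.factorial : ℚ) ≠ 0 := Nat.cast_ne_zero.mpr (Nat.factorial_ne_zero _)
    have h2 : ((n-k).factorial : ℚ) ≠ 0 := Nat.cast_ne_zero.mpr (Nat.factorial_ne_zero _)
    have h3 : (n.factorial : ℚ) ≠ 0 := Nat.cast_ne_zero.mpr (Nat.factorial_ne_zero _)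
    field_simp
    linarith [hq]
  rw [Finset.sum_congr rfl hterm, ← Finset.sum_div]
  congr 1
  have h := sum_choose_mid n hn
  have : ((∑ k ∈ Finset.Icc 1 (n-1), n.choose k : ℕ) : ℚ) + 2 = 2^n := by
    exact_mod_cast congrArg (Nat.cast : ℕ → ℚ) h
  push_cast at this
  linarith

lemma sum_trees_rec (m : ℕ) :
    ∑ t ∈ trees (m+2), expCoeff t =
      ∑ k ∈ Finset.Icc 1 (m+1),
        (∑ t₁ ∈ trees k, expCoeff t₁) * (∑ t₂ ∈ trees (m+2-k), expCoeff t₂)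
          / (2^(m+2) - 2 : ℚ) := by
  rw [trees]
  rw [Finset.sum_biUnion]
  · rw [← Finset.sum_attach (Finset.Icc 1 (m+1))]
    apply Finset.sum_congr rfl
    intro k _
    rw [Finset.sum_image]
    · rw [Finset.sum_product]
      have hk := Finset.mem_Icc.mp k.2
      have hstep : ∀ t₁ ∈ trees k.1, ∀ t₂ ∈ trees (m+2-k.1),
          expCoeff (FreeMagma.mul t₁ t₂) = expCoeff t₁ * expCoeff t₂ / (2^(m+2) - 2 : ℚ) := by
        intro t₁ h₁ t₂ h₂
        have d₁ := (mem_trees _ _).mp h₁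
        have d₂ := (mem_trees _ _).mp h₂
        have : deg (FreeMagma.mul t₁ t₂) = m+2 := by simp [deg, d₁, d₂]; omega
        rw [expCoeff, this]
      rw [Finset.sum_congr rfl fun t₁ h₁ => Finset.sum_congr rfl fun t₂ h₂ => hstep t₁ h₁ t₂ h₂]
      rw [Finset.sum_mul, Finset.sum_div]
      apply Finset.sum_congr rfl
      intro t₁ _
      rw [Finset.mul_sum, Finset.sum_div]
    · intro p _ q _ hpq
      replace hpq : p.1 = q.1 ∧ p.2 = q.2 := by injection hpq with h1 h2; exact ⟨h1, h2⟩
      exact Prod.ext hpq.1 hpq.2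
  · intro a _ b _ hab
    simp only [Finset.disjoint_left]
    intro x hxa hxb
    simp only [Finset.mem_image, Finset.mem_product] at hxa hxb
    obtain ⟨p, ⟨hp₁, _⟩, hpx⟩ := hxa
    obtain ⟨q, ⟨hq₁, _⟩, hqx⟩ := hxb
    rw [← hqx] at hpx
    replace hpx : p.1 = q.1 ∧ p.2 = q.2 := by injection hpx with h1 h2; exact ⟨h1, h2⟩
    apply hab
    have := (mem_trees _ _).mp hp₁
    have := (mem_trees _ _).mp hq₁
    apply Subtype.ext
    rw [← this, ← ‹deg p.1 = a.1›, hpx.1]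

lemma sum_trees_eq : ∀ n, 1 ≤ n → ∑ t ∈ trees n, expCoeff t = 1 / (n.factorial : ℚ) := by
  intro n
  induction n using Nat.strong_induction_on with
  | _ n ih =>
    intro hn
    match n with
    | 1 => simp [trees, expCoeff]
    | (m+2) =>
      rw [sum_trees_rec m]
      have hIH : ∀ k ∈ Finset.Icc 1 (m+1),
          (∑ t₁ ∈ trees k, expCoeff t₁) * (∑ t₂ ∈ trees (m+2-k), expCoeff t₂)
            / (2^(m+2) - 2 : ℚ)
          = (1 / (k.factorial : ℚ)) * (1 / ((m+2-k).factorial : ℚ)) / (2^(m+2) - 2 : ℚ) := by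
        intro k hk
        have hk' := Finset.mem_Icc.mp hk
        rw [ih k (by omega) (by omega), ih (m+2-k) (by omega) (by omega)]
      rw [Finset.sum_congr rfl hIH, ← Finset.sum_div]
      have hid := sum_inv_factorial (m+2) (by omega)
      have h21 : m + 2 - 1 = m + 1 := by omega
      rw [h21] at hid
      rw [hid]
      have hne : (2^(m+2) - 2 : ℚ) ≠ 0 := by
        have : (4:ℚ) ≤ 2^(m+2) := by
          calc (4:ℚ) = 2^2 := by norm_num
          _ ≤ 2^(m+2) := by apply pow_le_pow_right₀ (by norm_num); omega
        linarith
      field_simp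

theorem sum_expCoeff_eq (n : ℕ) (hn : 1 ≤ n) :
    ∑ᶠ t ∈ {t : FreeMagma Unit | deg t = n}, expCoeff t = 1 / (n.factorial : ℚ) := by
  have hset : {t : FreeMagma Unit | deg t = n} = ↑(trees n) := by
    ext t; simp [mem_trees]
  rw [hset, finsum_mem_coe_finset]
  exact sum_trees_eq n hn
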